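/- The formal power series g(X) = ∑_{n≥1} 2(4n+1)!/((n+1)!(3n+2)!) X^n is algebraic over the field of rational functions ℚ(X), of degree at most 4. -/

import Mathlib

set_option maxHeartbeats 1000000

open PowerSeries

noncomputable def g : PowerSeries ℚ :=
  PowerSeries.mk (fun n =>
    if n = 0 then 0 else
      2 * (Nat.factorial (4 * n + 1)) / ((Nat.factorial (n + 1)) * (Nat.factorial (3 * n + 2))))

/-- Coefficients of powers of the auxiliary series `u`: `c k n = (k/n) C(4n, n-k)`. -/
noncomputable def cc (k n : ℕ) : ℚ :=
  if n = 0 then (if k = 0 then 1 else 0)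
  else if n < k then 0
  else (k : ℚ) / (n : ℚ) * ((4*n).choose (n-k) : ℕ)

lemma pasc4 (N m : ℕ) : (N+4).choose (m+4) =
    N.choose (m+4) + 4*N.choose (m+3) + 6*N.choose (m+2) + 4*N.choose (m+1) + N.choose m := by
  simp [Nat.choose_succ_succ', show N+4 = N+3+1 by ring, show N+3 = N+2+1 by ring,
    show N+2 = N+1+1 by ring]
  ring

lemma pasc3 (N m : ℕ) : (N+3).choose (m+3) =
    N.choose (m+3) + 3*N.choose (m+2) + 3*N.choose (m+1) + N.choose m := by
  simp [Nat.choose_succ_succ', show N+3 = N+2+1 by ring, show N+2 = N+1+1 by ring]; ring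

lemma pasc4b (N : ℕ) : (N+4).choose 2 = N.choose 2 + 4*N.choose 1 + 6 := by
  simp [Nat.choose_succ_succ', show N+4 = N+3+1 by ring, show N+3 = N+2+1 by ring,
    show N+2 = N+1+1 by ring, show (2:ℕ) = 1+1 by ring]; ring

lemma pasc4a (N : ℕ) : (N+4).choose 3 = N.choose 3 + 4*N.choose 2 + 6*N.choose 1 + 4 := by
  simp [Nat.choose_succ_succ', show N+4 = N+3+1 by ring, show N+3 = N+2+1 by ring,
    show N+2 = N+1+1 by ring, show (3:ℕ) = 2+1 by ring, show (2:ℕ) = 1+1 by ring]; ring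

lemma pasc3a (N : ℕ) : (N+3).choose 2 = N.choose 2 + 3*N.choose 1 + 3 := by
  simp [Nat.choose_succ_succ', show N+3 = N+2+1 by ring, show N+2 = N+1+1 by ring,
    show (2:ℕ) = 1+1 by ring]; ring

lemma absorb (N m : ℕ) : ((m:ℚ)+1) * ((N+1).choose (m+1) : ℕ) = ((N:ℚ)+1) * (N.choose m : ℕ) := by
  have h2 := congrArg (Nat.cast : ℕ → ℚ) (Nat.add_one_mul_choose_eq N m)
  push_cast at h2
  linarith [h2]

lemma key (k n : ℕ) : cc (k+1) (n+1) =
    cc k n + 4 * cc (k+1) n + 6 * cc (k+2) n + 4 * cc (k+3) n + cc (k+4) n := by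
  rcases Nat.eq_zero_or_pos n with hn | hn
  · subst hn
    rcases k with _ | k <;> simp [cc]
  by_cases hk : n < k
  · have h0 : n ≠ 0 := hn.ne'
    simp only [cc, if_neg h0, if_neg (Nat.succ_ne_zero n)]
    rw [if_pos (by omega : n+1 < k+1), if_pos hk, if_pos (by omega : n < k+1),
      if_pos (by omega : n < k+2), if_pos (by omega : n < k+3), if_pos (by omega : n < k+4)]
    ring
  push_neg at hk
  obtain ⟨m, rfl⟩ : ∃ m, n = k + m := ⟨n - k, by omega⟩
  rcases m with _ | _ | _ | _ | m'
  · -- m = 0, so k ≥ 1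
    obtain ⟨k', rfl⟩ : ∃ k', k = k'+1 := ⟨k - 1, by omega⟩
    set k := k'+1 with hkk
    simp only [cc, if_neg (by omega : ¬(k+0+1=0)), if_neg (by omega : ¬(k+0=0)),
      if_neg (by omega : ¬(k+0+1 < k+1)), if_neg (by omega : ¬(k+0 < k)),
      if_pos (by omega : k+0 < k+1), if_pos (by omega : k+0 < k+2),
      if_pos (by omega : k+0 < k+3), if_pos (by omega : k+0 < k+4),
      show k+0+1-(k+1) = 0 by omega, show k+0-k = 0 by omega, Nat.choose_zero_right]
    push_cast
    have h1 : ((k:ℚ)+0+1) ≠ 0 := by positivity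
    have h2 : ((k:ℚ)+0) ≠ 0 := by rw [hkk]; push_cast; positivity
    simp only [if_neg (lt_irrefl k), if_pos (by omega : k < k+1), if_pos (by omega : k < k+2),
      if_pos (by omega : k < k+3), if_pos (by omega : k < k+4), Nat.sub_self,
      Nat.choose_zero_right, Nat.cast_one]
    field_simp
    ring
  · -- m = 1
    simp only [cc, if_neg (by omega : ¬(k+1+1=0)), if_neg (by omega : ¬(k+1=0)),
      if_neg (by omega : ¬(k+1+1 < k+1)), if_neg (by omega : ¬(k+1 < k)),
      if_neg (by omega : ¬(k+1 < k+1)), if_pos (by omega : k+1 < k+2),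
      if_pos (by omega : k+1 < k+3), if_pos (by omega : k+1 < k+4),
      show k+1+1-(k+1) = 1 by omega, show k+1-k = 1 by omega,
      show k+1-(k+1) = 0 by omega, Nat.choose_zero_right, Nat.choose_one_right]
    push_cast
    have h1 : ((k:ℚ)+1+1) ≠ 0 := by positivity
    have h2 : ((k:ℚ)+1) ≠ 0 := by positivity
    field_simp
    ring
  · -- m = 2
    set n := k+2 with hn2
    simp only [cc, if_neg (by omega : ¬(n+1=0)), if_neg (by omega : ¬(n=0)),
      if_neg (by omega : ¬(n+1 < k+1)), if_neg (by omega : ¬(n < k)),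
      if_neg (by omega : ¬(n < k+1)), if_neg (by omega : ¬(n < k+2)),
      if_pos (by omega : n < k+3), if_pos (by omega : n < k+4),
      show n+1-(k+1) = 2 by omega, show n-k = 2 by omega,
      show n-(k+1) = 1 by omega, show n-(k+2) = 0 by omega,
      Nat.choose_zero_right, Nat.choose_one_right]
    rw [show (4*(n+1) : ℕ) = 4*n+4 by ring]
    have h1 := congrArg (Nat.cast : ℕ → ℚ) (pasc4b (4*n))
    rw [Nat.choose_one_right] at h1
    have h3 := absorb (4*n+3) 1
    rw [show (4*n+3+1 : ℕ) = 4*n+4 by ring, show (1+1 : ℕ) = 2 by ring,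
      Nat.choose_one_right] at h3
    push_cast at h1 h3 ⊢
    have hn0 : ((n:ℚ)) ≠ 0 := Nat.cast_ne_zero.mpr (by omega)
    have hn1 : ((n:ℚ)+1) ≠ 0 := by positivity
    simp only [if_neg (lt_irrefl n), Nat.sub_self, Nat.choose_zero_right, Nat.cast_one]
    field_simp
    have hnq : (n:ℚ) = (k:ℚ) + 2 := by rw [hn2]; push_cast; ring
    linear_combination ((k:ℚ)+3)*(k:ℚ)*h1 + h3
      + (((k:ℚ)+1)*(((4*n+4).choose 2 : ℕ):ℚ) - (k:ℚ)*(((4*n).choose 2 : ℕ):ℚ)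
        - (16*(k:ℚ)+6)*(n:ℚ) - 6*((k:ℚ)+1)) * hnq
  · -- m = 3
    set n := k+3 with hn3
    simp only [cc, if_neg (by omega : ¬(n+1=0)), if_neg (by omega : ¬(n=0)),
      if_neg (by omega : ¬(n+1 < k+1)), if_neg (by omega : ¬(n < k)),
      if_neg (by omega : ¬(n < k+1)), if_neg (by omega : ¬(n < k+2)),
      if_neg (by omega : ¬(n < k+3)), if_pos (by omega : n < k+4),
      show n+1-(k+1) = 3 by omega, show n-k = 3 by omega,
      show n-(k+1) = 2 by omega, show n-(k+2) = 1 by omega, show n-(k+3) = 0 by omega,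
      Nat.choose_zero_right, Nat.choose_one_right]
    rw [show (4*(n+1) : ℕ) = 4*n+4 by ring]
    have h1 := congrArg (Nat.cast : ℕ → ℚ) (pasc4a (4*n))
    rw [Nat.choose_one_right] at h1
    have h2 := congrArg (Nat.cast : ℕ → ℚ) (pasc3a (4*n))
    rw [Nat.choose_one_right] at h2
    have h3 := absorb (4*n+3) 2
    rw [show (4*n+3+1 : ℕ) = 4*n+4 by ring, show (2+1 : ℕ) = 3 by ring] at h3
    push_cast at h1 h2 h3 ⊢
    have hn0 : ((n:ℚ)) ≠ 0 := Nat.cast_ne_zero.mpr (by omega)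
    have hn1 : ((n:ℚ)+1) ≠ 0 := by positivity
    simp only [if_neg (lt_irrefl n), Nat.sub_self, Nat.choose_zero_right, Nat.cast_one]
    field_simp
    have hnq : (n:ℚ) = (k:ℚ) + 3 := by rw [hn3]; push_cast; ring
    linear_combination ((k:ℚ)+4)*(k:ℚ)*h1 + 4*((k:ℚ)+4)*h2 + h3
      + (((k:ℚ)+1)*(((4*n+4).choose 3 : ℕ):ℚ) - (k:ℚ)*(((4*n).choose 3 : ℕ):ℚ)
        - 4*((k:ℚ)+1)*(((4*n).choose 2 : ℕ):ℚ) + 4*(((4*n+3).choose 2 : ℕ):ℚ)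
        - (24*(k:ℚ)+52)*(n:ℚ) - (4*(k:ℚ)+16)) * hnq
  · -- m = m'+4
    set n := k+(m'+4) with hnm
    have e0 : n+1-(k+1) = m'+4 := by omega
    have e1 : n-k = m'+4 := by omega
    have e2 : n-(k+1) = m'+3 := by omega
    have e3 : n-(k+2) = m'+2 := by omega
    have e4 : n-(k+3) = m'+1 := by omega
    have e5 : n-(k+4) = m' := by omega
    simp only [cc, if_neg (by omega : ¬(n+1=0)), if_neg (by omega : ¬(n=0)),
      if_neg (by omega : ¬(n+1 < k+1)), if_neg (by omega : ¬(n < k)),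
      if_neg (by omega : ¬(n < k+1)), if_neg (by omega : ¬(n < k+2)),
      if_neg (by omega : ¬(n < k+3)), if_neg (by omega : ¬(n < k+4)),
      e0, e1, e2, e3, e4, e5]
    have h1 := congrArg (Nat.cast : ℕ → ℚ) (pasc4 (4*n) m')
    have h2 := congrArg (Nat.cast : ℕ → ℚ) (pasc3 (4*n) m')
    have h3 := absorb (4*n+3) (m'+3)
    push_cast at h1 h2 h3 ⊢
    have hn0 : ((n:ℚ)) ≠ 0 := Nat.cast_ne_zero.mpr (by omega)
    have hn1 : ((n:ℚ)+1) ≠ 0 := by positivity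
    field_simp
    rw [show (4*(n+1) : ℕ) = 4*n+4 by ring]
    rw [show (4*n+3+1 : ℕ) = 4*n+4 by ring, show (m'+3+1 : ℕ) = m'+4 by ring] at h3
    have hnq : (n:ℚ) = (k:ℚ) + (m':ℚ) + 4 := by rw [hnm]; push_cast; ring
    linear_combination ((n:ℚ)+1)*(k:ℚ)*h1 + 4*((n:ℚ)+1)*h2 + h3
      + (((4*n+4).choose (m'+4) : ℕ):ℚ) * hnq

noncomputable def u : PowerSeries ℚ := PowerSeries.mk (cc 1)

lemma hC4 : (PowerSeries.C (R := ℚ)) 4 = 4 := map_ofNat _ 4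
lemma hC6 : (PowerSeries.C (R := ℚ)) 6 = 6 := map_ofNat _ 6

lemma cc_zero (n : ℕ) : cc 0 n = if n = 0 then 1 else 0 := by
  unfold cc; split_ifs <;> simp_all

lemma cu0 : PowerSeries.constantCoeff u = 0 := by
  have h : (PowerSeries.coeff 0) u = cc 1 0 := PowerSeries.coeff_mk 0 (cc 1)
  rw [PowerSeries.coeff_zero_eq_constantCoeff] at h
  rw [h]; simp [cc]

lemma expandk (m k : ℕ) (H : ∀ j, (PowerSeries.coeff m) (u^j) = cc j m) :
    (PowerSeries.coeff m) ((1+u)^4 * u^k) = cc (k+1) (m+1) := by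
  have hexp : ((1:ℚ⟦X⟧)+u)^4 * u^k = u^k + PowerSeries.C (R := ℚ) 4 * u^(k+1)
      + PowerSeries.C (R := ℚ) 6 * u^(k+2) + PowerSeries.C (R := ℚ) 4 * u^(k+3) + u^(k+4) := by
    rw [hC4, hC6]; ring
  rw [hexp]
  simp only [map_add, PowerSeries.coeff_C_mul, H]
  rw [key k m]

lemma coeff_u_pow : ∀ n k, (PowerSeries.coeff n) (u^k) = cc k n := by
  intro n
  induction n using Nat.strong_induction_on with
  | _ n IH =>
    have hv : ∀ i, i ≤ n → (PowerSeries.coeff i) (PowerSeries.X*(1+u)^4)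
        = (PowerSeries.coeff i) u := by
      intro i hi
      rcases i with _ | m
      · rw [PowerSeries.coeff_zero_eq_constantCoeff, map_mul]
        simp [cu0]
      · rw [PowerSeries.coeff_succ_X_mul]
        have h := expandk m 0 (IH m (by omega))
        rw [pow_zero, mul_one] at h
        rw [h, show (PowerSeries.coeff (m+1)) u = cc 1 (m+1) from PowerSeries.coeff_mk _ _]
    intro k
    rcases k with _ | k
    · rw [pow_zero, PowerSeries.coeff_one, cc_zero]
    · rcases n with _ | m
      · rw [PowerSeries.coeff_zero_eq_constantCoeff, map_pow, cu0,
          zero_pow (Nat.succ_ne_zero k)]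
        simp [cc]
      · have h1 : (PowerSeries.coeff (m+1)) (u^(k+1))
            = (PowerSeries.coeff (m+1)) (PowerSeries.X*((1+u)^4 * u^k)) := by
          rw [pow_succ', ← mul_assoc, PowerSeries.coeff_mul, PowerSeries.coeff_mul]
          apply Finset.sum_congr rfl
          intro q hq
          simp at hq
          rw [hv q.1 (by omega)]
        rw [h1, PowerSeries.coeff_succ_X_mul, expandk m k (IH m (by omega))]

lemma hu : PowerSeries.X * (1+u)^4 = u := by
  ext i
  rcases i with _ | m
  · rw [PowerSeries.coeff_zero_eq_constantCoeff, map_mul]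
    simp [cu0]
  · rw [PowerSeries.coeff_succ_X_mul]
    have h := expandk m 0 (coeff_u_pow m)
    rw [pow_zero, mul_one] at h
    rw [h, show (PowerSeries.coeff (m+1)) u = cc 1 (m+1) from PowerSeries.coeff_mk _ _]

lemma coeff_identity (n : ℕ) :
    (if n = 0 then (0:ℚ) else
      2 * (Nat.factorial (4 * n + 1)) / ((Nat.factorial (n + 1)) * (Nat.factorial (3 * n + 2))))
    = cc 1 n - cc 2 n - cc 3 n := by
  rcases n with _ | _ | _ | m
  · simp [cc]
  · norm_num [cc, Nat.factorial]
  · norm_num [cc]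
  · set n := m+3 with hn
    have h1 : n - 1 = m+2 := by omega
    have h2 : n - 2 = m+1 := by omega
    have h3 : n - 3 = m := by omega
    simp only [cc, if_neg (by omega : ¬(n=0)), if_neg (by omega : ¬(n < 1)),
      if_neg (by omega : ¬(n < 2)), if_neg (by omega : ¬(n < 3)), h1, h2, h3,
      if_neg (by omega : ¬(m+3=0))]
    rw [Nat.cast_choose ℚ (by omega : m+2 ≤ 4*n), Nat.cast_choose ℚ (by omega : m+1 ≤ 4*n),
      Nat.cast_choose ℚ (by omega : m ≤ 4*n)]
    rw [show 4*n - (m+2) = 3*m+10 by omega, show 4*n - (m+1) = 3*m+11 by omega,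
      show 4*n - m = 3*m+12 by omega, show 4*n = 4*m+12 by omega]
    rw [show 4*m+12+1 = 4*m+13 by ring, show n+1 = m+4 by omega, show 3*n+2 = 3*m+11 by omega]
    have e1 : ((4*m+13).factorial : ℚ) = (4*(m:ℚ)+13) * (4*m+12).factorial := by
      rw [show 4*m+13 = (4*m+12)+1 by ring, Nat.factorial_succ]; push_cast; ring
    have e2 : ((m+4).factorial : ℚ) = ((m:ℚ)+4)*((m:ℚ)+3)*((m:ℚ)+2)*((m:ℚ)+1) * m.factorial := by
      rw [show m+4 = (m+3)+1 by ring, Nat.factorial_succ, show m+3 = (m+2)+1 by ring,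
        Nat.factorial_succ, show m+2 = (m+1)+1 by ring, Nat.factorial_succ, Nat.factorial_succ]
      push_cast; ring
    have e3 : ((m+2).factorial : ℚ) = ((m:ℚ)+2)*((m:ℚ)+1) * m.factorial := by
      rw [show m+2 = (m+1)+1 by ring, Nat.factorial_succ, Nat.factorial_succ]; push_cast; ring
    have e4 : ((m+1).factorial : ℚ) = ((m:ℚ)+1) * m.factorial := by
      rw [Nat.factorial_succ]; push_cast; ring
    have e5 : ((3*m+11).factorial : ℚ) = (3*(m:ℚ)+11) * (3*m+10).factorial := by
      rw [show 3*m+11 = (3*m+10)+1 by ring, Nat.factorial_succ]; push_cast; ring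
    have e6 : ((3*m+12).factorial : ℚ) = (3*(m:ℚ)+12)*(3*(m:ℚ)+11) * (3*m+10).factorial := by
      rw [show 3*m+12 = (3*m+11)+1 by ring, Nat.factorial_succ]; push_cast
      rw [e5]; ring
    rw [e1, e2, e3, e4, e5, e6]
    have nz1 : ((4*m+12).factorial : ℚ) ≠ 0 := Nat.cast_ne_zero.mpr (Nat.factorial_ne_zero _)
    have nz2 : (m.factorial : ℚ) ≠ 0 := Nat.cast_ne_zero.mpr (Nat.factorial_ne_zero _)
    have nz3 : ((3*m+10).factorial : ℚ) ≠ 0 := Nat.cast_ne_zero.mpr (Nat.factorial_ne_zero _)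
    have p1 : ((m:ℚ)+1) ≠ 0 := by positivity
    have p2 : ((m:ℚ)+2) ≠ 0 := by positivity
    have p3 : ((m:ℚ)+3) ≠ 0 := by positivity
    have p4 : ((m:ℚ)+4) ≠ 0 := by positivity
    have p5 : (3*(m:ℚ)+11) ≠ 0 := by positivity
    have p6 : (3*(m:ℚ)+12) ≠ 0 := by positivity
    have p7 : ((n:ℚ)) ≠ 0 := by rw [hn]; push_cast; positivity
    push_cast
    field_simp
    simp only [hn]; push_cast; ring

lemma hg : g = u - u^2 - u^3 := by
  ext n
  rw [map_sub, map_sub]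
  have c1 := coeff_u_pow n 1
  rw [pow_one] at c1
  rw [c1, coeff_u_pow n 2, coeff_u_pow n 3]
  rw [show (PowerSeries.coeff n) g = (if n = 0 then (0:ℚ) else
      2 * (Nat.factorial (4 * n + 1)) / ((Nat.factorial (n + 1)) * (Nat.factorial (3 * n + 2))))
    from PowerSeries.coeff_mk _ _]
  exact coeff_identity n

local notation "XX" => (PowerSeries.X : PowerSeries ℚ)
local notation "YY" => (Polynomial.X : Polynomial (Polynomial ℚ))
local notation "PX" => (Polynomial.X : Polynomial ℚ)

noncomputable def pquartic : Polynomial (Polynomial ℚ) :=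
  Polynomial.C (PX*(PX^2+11*PX-1)) + Polynomial.C (4*PX^3+25*PX^2-14*PX+1) * YY
    + Polynomial.C (PX*(6*PX^2+17*PX+3)) * YY^2 + Polynomial.C (PX^2*(4*PX+3)) * YY^3
    + Polynomial.C (PX^3) * YY^4

theorem stmt9 :
    ∃ p : Polynomial (Polynomial ℚ), p ≠ 0 ∧ p.natDegree ≤ 4 ∧
      Polynomial.eval₂ (Polynomial.coeToPowerSeries.ringHom) g p = 0 := by
  refine ⟨pquartic, ?_, ?_, ?_⟩
  · intro h
    have h4 := congrArg (fun q => Polynomial.coeff q 4) h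
    simp only [pquartic, Polynomial.coeff_add, Polynomial.coeff_C_mul, Polynomial.coeff_C,
      Polynomial.coeff_X_pow, Polynomial.coeff_X, Polynomial.coeff_zero] at h4
    norm_num at h4
  · unfold pquartic
    compute_degree
  · unfold pquartic
    simp only [Polynomial.eval₂_add, Polynomial.eval₂_mul, Polynomial.eval₂_C,
      Polynomial.eval₂_X, Polynomial.eval₂_pow]
    have hX : Polynomial.coeToPowerSeries.ringHom PX = XX := by
      rw [Polynomial.coeToPowerSeries.ringHom_apply, Polynomial.coe_X]
    simp only [map_add, map_sub, map_mul, map_pow, map_one, map_ofNat, hX]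
    rw [hg]
    have hz : ((1:ℚ⟦X⟧)+u)^12 *
        (XX*(XX^2+11*XX-1) + (4*XX^3+25*XX^2-14*XX+1)*(u-u^2-u^3)
          + XX*(6*XX^2+17*XX+3)*(u-u^2-u^3)^2 + XX^2*(4*XX+3)*(u-u^2-u^3)^3
          + XX^3*(u-u^2-u^3)^4) = 0 := by
      linear_combination (- 1 - 11*u - 53*u^2 - 142*u^3 - 209*u^4 - 77*u^5 + 363*u^6 + 924*u^7 + 1221*u^8 + 1067*u^9 + 649*u^10 + 274*u^11 + 77*u^12 + 13*u^13 + 1*u^14 + 11*XX + 114*XX*u + 508*XX*u^2 + 1220*XX*u^3 + 1496*XX*u^4 + 140*XX*u^5 - 2532*XX*u^6 - 3916*XX*u^7 - 2090*XX*u^8 + 1232*XX*u^9 + 2772*XX*u^10 + 1804*XX*u^11 + 224*XX*u^12 - 460*XX*u^13 - 364*XX*u^14 - 132*XX*u^15 - 25*XX*u^16 - 2*XX*u^17 + 1*XX^2 + 12*XX^2*u + 62*XX^2*u^2 + 172*XX^2*u^3 + 237*XX^2*u^4 - 16*XX^2*u^5 - 664*XX^2*u^6 - 1104*XX^2*u^7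 - 494*XX^2*u^8 + 936*XX^2*u^9 + 1716*XX^2*u^10 + 936*XX^2*u^11 - 494*XX^2*u^12 - 1104*XX^2*u^13 - 664*XX^2*u^14 - 16*XX^2*u^15 + 237*XX^2*u^16 + 172*XX^2*u^17 + 62*XX^2*u^18 + 12*XX^2*u^19 + 1*XX^2*u^20 : PowerSeries ℚ) * hu
    rcases mul_eq_zero.mp hz with h | h
    · exfalso
      have h0 := congrArg (PowerSeries.constantCoeff) h
      rw [map_pow, map_add, map_one, cu0] at h0
      norm_num at h0
    · linear_combination h
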